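/- Let M = [[A, B],[B*, C]] be a positive semidefinite 2×2 block operator matrix. For any operator P on H₁ with P*P = S(M;{0}) and any R on H₂ with R*R = C, there exists Q : H₁ → H₂ with ran Q ⊆ closure(ran R) such that M equals the product [[P*, Q*],[0, R*]]·[[P, 0],[Q, R]]. -/

import Mathlib

open scoped InnerProductSpace
open ContinuousLinearMap

/-- Positivity of the block operator matrix `[[A, B], [B*, C]]` on `H₁ ⊕ H₂`,
expressed through its quadratic form. -/
def BlockPos2 {H₁ H₂ : Type*} [NormedAddCommGroup H₁] [InnerProductSpace ℂ H₁]
    [NormedAddCommGroup H₂] [InnerProductSpace ℂ H₂]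
    (A : H₁ →L[ℂ] H₁) (B : H₂ →L[ℂ] H₁) (C : H₂ →L[ℂ] H₂) : Prop :=
  ∀ (x : H₁) (y : H₂),
    0 ≤ (⟪A x, x⟫_ℂ).re + 2 * (⟪B y, x⟫_ℂ).re + (⟪C y, y⟫_ℂ).re

/-- `S` is the Schur complement of the positive block operator matrix
`[[A, B], [B*, C]]` supported on the first block. -/
def IsSchurComplementFst {H₁ H₂ : Type*} [NormedAddCommGroup H₁] [InnerProductSpace ℂ H₁]
    [NormedAddCommGroup H₂] [InnerProductSpace ℂ H₂] [CompleteSpace H₁] [CompleteSpace H₂]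
    (A : H₁ →L[ℂ] H₁) (B : H₂ →L[ℂ] H₁) (C : H₂ →L[ℂ] H₂) (S : H₁ →L[ℂ] H₁) : Prop :=
  S.IsPositive ∧ BlockPos2 (A - S) B C ∧
    ∀ X : H₁ →L[ℂ] H₁, X.IsPositive → BlockPos2 (A - X) B C →
      ∀ x : H₁, (⟪X x, x⟫_ℂ).re ≤ (⟪S x, x⟫_ℂ).re


private lemma re_inner_self' {E : Type*} [NormedAddCommGroup E] [InnerProductSpace ℂ E]
    (z : E) : (⟪z, z⟫_ℂ).re = ‖z‖ ^ 2 := by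
  rw [← RCLike.re_to_complex]; exact inner_self_eq_norm_sq z

/-- If `‖B y‖ ≤ c ‖R y‖` for all `y`, there is `Q` with `Q* R = B` and
range of `Q` inside the closure of the range of `R`. -/
private lemma exists_clm_factor {H₁ H₂ : Type*}
    [NormedAddCommGroup H₁] [InnerProductSpace ℂ H₁]
    [NormedAddCommGroup H₂] [InnerProductSpace ℂ H₂]
    [CompleteSpace H₁] [CompleteSpace H₂]
    (B : H₂ →L[ℂ] H₁) (R : H₂ →L[ℂ] H₂) (c : ℝ)
    (hB : ∀ y : H₂, ‖B y‖ ≤ c * ‖R y‖) :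
    ∃ Q : H₁ →L[ℂ] H₂, (∀ (x : H₁) (y : H₂), ⟪R y, Q x⟫_ℂ = ⟪B y, x⟫_ℂ) ∧
      ∀ x : H₁, Q x ∈ (LinearMap.range (R : H₂ →ₗ[ℂ] H₂)).topologicalClosure := by
  classical
  have hker : ∀ y : H₂, R y = 0 → B y = 0 := by
    intro y hy
    have := hB y
    rw [hy, norm_zero, mul_zero] at this
    exact norm_eq_zero.mp (le_antisymm this (norm_nonneg _))
  set Rl : H₂ →ₗ[ℂ] H₂ := (R : H₂ →ₗ[ℂ] H₂) with hRl
  have hker' : LinearMap.ker Rl ≤ LinearMap.ker (B : H₂ →ₗ[ℂ] H₁) := by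
    intro y hy
    exact hker y hy
  set g : ↥(LinearMap.range Rl) →ₗ[ℂ] H₁ :=
    (Submodule.liftQ (LinearMap.ker Rl) (B : H₂ →ₗ[ℂ] H₁) hker') ∘ₗ
      (Rl.quotKerEquivRange.symm : ↥(LinearMap.range Rl) →ₗ[ℂ] H₂ ⧸ LinearMap.ker Rl) with hgdef
  have hg : ∀ (y : H₂) (h : R y ∈ LinearMap.range Rl), g ⟨R y, h⟩ = B y := by
    intro y h
    have h1 : Rl.quotKerEquivRange (Submodule.Quotient.mk y) = ⟨R y, h⟩ := by
      apply Subtype.ext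
      exact Rl.quotKerEquivRange_apply_mk y
    have h2 : Rl.quotKerEquivRange.symm ⟨R y, h⟩ = Submodule.Quotient.mk y := by
      rw [← h1, LinearEquiv.symm_apply_apply]
    simp only [hgdef, LinearMap.comp_apply, LinearEquiv.coe_coe, h2, Submodule.liftQ_apply,
      ContinuousLinearMap.coe_coe]
  have hgbound : ∀ z : ↥(LinearMap.range Rl), ‖g z‖ ≤ c * ‖z‖ := by
    rintro ⟨z, hz⟩
    obtain ⟨y, rfl⟩ := hz
    have hz' : R y ∈ LinearMap.range Rl := ⟨y, rfl⟩
    have he : (⟨Rl y, ⟨y, rfl⟩⟩ : ↥(LinearMap.range Rl)) = ⟨R y, hz'⟩ := rfl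
    rw [he, hg y hz']
    have he2 : ‖(⟨R y, hz'⟩ : ↥(LinearMap.range Rl))‖ = ‖R y‖ := rfl
    rw [he2]
    exact hB y
  set gc : ↥(LinearMap.range Rl) →L[ℂ] H₁ := g.mkContinuous c hgbound with hgc
  set K : Submodule ℂ H₂ := (LinearMap.range Rl).topologicalClosure with hK
  haveI : CompleteSpace K := (Submodule.isClosed_topologicalClosure _).completeSpace_coe
  set incl0 : ↥(LinearMap.range Rl) →ₗ[ℂ] ↥K :=
    Submodule.inclusion (Submodule.le_topologicalClosure _) with hincl0
  have hincl0norm : ∀ z : ↥(LinearMap.range Rl), ‖incl0 z‖ = ‖z‖ := fun z => rfl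
  set incl : ↥(LinearMap.range Rl) →L[ℂ] ↥K :=
    incl0.mkContinuous 1 (fun z => by rw [hincl0norm]; simp) with hincl
  have hisom : Isometry ⇑incl := AddMonoidHomClass.isometry_of_norm _ hincl0norm
  have hdense : DenseRange ⇑incl := by
    intro z
    rw [closure_subtype]
    have himg : Subtype.val '' Set.range ⇑incl = (LinearMap.range Rl : Set H₂) := by
      ext v
      constructor
      · rintro ⟨w, ⟨u, rfl⟩, rfl⟩
        exact u.2
      · rintro hv
        exact ⟨incl ⟨v, hv⟩, ⟨⟨v, hv⟩, rfl⟩, rfl⟩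
    rw [himg]
    have hKcoe : (K : Set H₂) = closure ((LinearMap.range Rl : Submodule ℂ H₂) : Set H₂) :=
      Submodule.topologicalClosure_coe _
    rw [← hKcoe]
    exact z.2
  set fbar : ↥K →L[ℂ] H₁ := gc.extend incl with hfbar
  set T : H₂ →L[ℂ] H₁ := fbar ∘L K.orthogonalProjectionOnto with hT
  refine ⟨adjoint T, ?_, ?_⟩
  · intro x y
    rw [adjoint_inner_right]
    have hmem : R y ∈ K := Submodule.le_topologicalClosure _ ⟨y, rfl⟩
    have hproj : K.orthogonalProjectionOnto (R y) = ⟨R y, hmem⟩ :=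
      Submodule.orthogonalProjectionOnto_mem_subspace_eq_self (⟨R y, hmem⟩ : K)
    rw [hT, comp_apply, hproj]
    have heq : (⟨R y, hmem⟩ : K) = incl ⟨R y, ⟨y, rfl⟩⟩ := by
      apply Subtype.ext
      simp only [hincl, LinearMap.mkContinuous_apply, hincl0, Submodule.coe_inclusion]
    rw [heq, ContinuousLinearMap.extend_eq (h_dense := hdense) (h_e := hisom.isUniformInducing)]
    have hgc' : gc ⟨R y, ⟨y, rfl⟩⟩ = g ⟨R y, ⟨y, rfl⟩⟩ := by
      simp only [hgc, LinearMap.mkContinuous_apply]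
    rw [hgc', hg y ⟨y, rfl⟩]
  · intro x
    have hQadj : adjoint T = K.subtypeL ∘L adjoint fbar := by
      rw [hT, adjoint_comp, Submodule.adjoint_orthogonalProjectionOnto]
    rw [hQadj]
    exact ((adjoint fbar) x).2

set_option maxHeartbeats 1000000 in
theorem exists_Q_of_schur_factor'
    {H₁ H₂ : Type*} [NormedAddCommGroup H₁] [InnerProductSpace ℂ H₁]
    [NormedAddCommGroup H₂] [InnerProductSpace ℂ H₂] [CompleteSpace H₁] [CompleteSpace H₂]
    (A P : H₁ →L[ℂ] H₁) (C R : H₂ →L[ℂ] H₂) (B : H₂ →L[ℂ] H₁)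
    (hAsa : IsSelfAdjoint A)
    (hM : ∀ (x : H₁) (y : H₂),
      0 ≤ (⟪A x, x⟫_ℂ).re + 2 * (⟪B y, x⟫_ℂ).re + (⟪C y, y⟫_ℂ).re)
    (hPpos : (P.adjoint ∘L P).IsPositive)
    (hPblock : ∀ (x : H₁) (y : H₂),
      0 ≤ (⟪(A - P.adjoint ∘L P) x, x⟫_ℂ).re + 2 * (⟪B y, x⟫_ℂ).re + (⟪C y, y⟫_ℂ).re)
    (hPmax : ∀ X : H₁ →L[ℂ] H₁, X.IsPositive →
      (∀ (x : H₁) (y : H₂),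
        0 ≤ (⟪(A - X) x, x⟫_ℂ).re + 2 * (⟪B y, x⟫_ℂ).re + (⟪C y, y⟫_ℂ).re) →
      ∀ x : H₁, (⟪X x, x⟫_ℂ).re ≤ (⟪(P.adjoint ∘L P) x, x⟫_ℂ).re)
    (hR : R.adjoint ∘L R = C) :
    ∃ Q : H₁ →L[ℂ] H₂, Set.range Q ⊆ closure (Set.range R) ∧
      A = P.adjoint ∘L P + Q.adjoint ∘L Q ∧
      B = Q.adjoint ∘L R := by
  classical
  -- quadratic form of C
  have hC : ∀ y : H₂, (⟪C y, y⟫_ℂ).re = ‖R y‖ ^ 2 := by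
    intro y
    rw [← hR, comp_apply, adjoint_inner_left]
    exact re_inner_self' _
  -- Cauchy–Schwarz for the block form
  have hCS : ∀ (x : H₁) (y : H₂),
      ((⟪B y, x⟫_ℂ).re) ^ 2 ≤ (⟪A x, x⟫_ℂ).re * ‖R y‖ ^ 2 := by
    intro x y
    have h' : ∀ t : ℝ, 0 ≤ (⟪A x, x⟫_ℂ).re * (t * t)
        + (2 * (⟪B y, x⟫_ℂ).re) * t + ‖R y‖ ^ 2 := by
      intro t
      have h := hM ((t : ℂ) • x) y
      simp only [map_smul, inner_smul_left, inner_smul_right, Complex.conj_ofReal,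
        hC, Complex.mul_re, Complex.ofReal_re, Complex.ofReal_im, zero_mul, mul_zero,
        sub_zero] at h
      nlinarith [h]
    have hd := discrim_le_zero h'
    rw [discrim] at hd
    nlinarith [hd]
  -- norm bound on B through R
  have hAz : ∀ z : H₁, (⟪A z, z⟫_ℂ).re ≤ ‖A‖ * ‖z‖ ^ 2 := by
    intro z
    have h1 : (⟪A z, z⟫_ℂ).re ≤ ‖⟪A z, z⟫_ℂ‖ := Complex.re_le_norm _
    have h2 : ‖⟪A z, z⟫_ℂ‖ ≤ ‖A z‖ * ‖z‖ := norm_inner_le_norm _ _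
    have h3 : ‖A z‖ ≤ ‖A‖ * ‖z‖ := A.le_opNorm z
    nlinarith [norm_nonneg z]
  have hBnorm : ∀ y : H₂, ‖B y‖ ≤ Real.sqrt ‖A‖ * ‖R y‖ := by
    intro y
    have h := hCS (B y) y
    rw [re_inner_self'] at h
    have hA := hAz (B y)
    by_cases hb : ‖B y‖ = 0
    · rw [hb]
      positivity
    · have hb' : 0 < ‖B y‖ := (norm_nonneg _).lt_of_ne (Ne.symm hb)
      have h2 : ‖B y‖ ^ 2 ≤ ‖A‖ * ‖R y‖ ^ 2 := by
        have h1 : ‖B y‖ ^ 2 * ‖B y‖ ^ 2 ≤ (‖A‖ * ‖R y‖ ^ 2) * ‖B y‖ ^ 2 := by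
          nlinarith [sq_nonneg (‖R y‖)]
        have hb2 : 0 < ‖B y‖ ^ 2 := by positivity
        exact le_of_mul_le_mul_right h1 hb2
      have h3 : ‖B y‖ ≤ Real.sqrt (‖A‖ * ‖R y‖ ^ 2) := by
        rw [← Real.sqrt_sq (norm_nonneg (B y))]
        exact Real.sqrt_le_sqrt h2
      rwa [Real.sqrt_mul (norm_nonneg A), Real.sqrt_sq (norm_nonneg (R y))] at h3
  -- obtain Q from the factorization lemma
  obtain ⟨Q, hQinner, hQmem0⟩ := exists_clm_factor B R (Real.sqrt ‖A‖) hBnorm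
  have hKcl : ((LinearMap.range (R : H₂ →ₗ[ℂ] H₂)).topologicalClosure : Set H₂)
      = closure (Set.range ⇑R) := by
    rw [Submodule.topologicalClosure_coe, LinearMap.coe_range]
    rfl
  have hQmem : ∀ x : H₁, Q x ∈ closure (Set.range ⇑R) := by
    intro x
    rw [← hKcl]
    exact hQmem0 x
  have hQnegmem : ∀ x : H₁, -(Q x) ∈ closure (Set.range ⇑R) := by
    intro x
    rw [← hKcl]
    exact ((LinearMap.range (R : H₂ →ₗ[ℂ] H₂)).topologicalClosure).neg_mem (hQmem0 x)
  clear hQmem0 hKcl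
  -- quadratic forms
  have hPP : ∀ x : H₁, (⟪(P.adjoint ∘L P) x, x⟫_ℂ).re = ‖P x‖ ^ 2 := by
    intro x
    rw [comp_apply, adjoint_inner_left]
    exact re_inner_self' _
  have hQQ : ∀ x : H₁, (⟪(Q.adjoint ∘L Q) x, x⟫_ℂ).re = ‖Q x‖ ^ 2 := by
    intro x
    rw [comp_apply, adjoint_inner_left]
    exact re_inner_self' _
  -- inequality 1 : ‖Px‖² + ‖Qx‖² ≤ re⟪Ax,x⟫
  have hineq1 : ∀ x : H₁, ‖P x‖ ^ 2 + ‖Q x‖ ^ 2 ≤ (⟪A x, x⟫_ℂ).re := by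
    intro x
    have hcont : Continuous fun z : H₂ =>
        (⟪A x, x⟫_ℂ).re - ‖P x‖ ^ 2 + 2 * (⟪z, Q x⟫_ℂ).re + ‖z‖ ^ 2 := by
      apply Continuous.add
      apply Continuous.add continuous_const
      · exact (continuous_const.mul (Complex.continuous_re.comp
          (continuous_id.inner continuous_const)))
      · exact (continuous_norm.pow 2)
    have hclosed : IsClosed {z : H₂ | 0 ≤ (⟪A x, x⟫_ℂ).re - ‖P x‖ ^ 2
        + 2 * (⟪z, Q x⟫_ℂ).re + ‖z‖ ^ 2} :=
      isClosed_le continuous_const hcont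
    have hsub : Set.range ⇑R ⊆ {z : H₂ | 0 ≤ (⟪A x, x⟫_ℂ).re - ‖P x‖ ^ 2
        + 2 * (⟪z, Q x⟫_ℂ).re + ‖z‖ ^ 2} := by
      rintro _ ⟨y, rfl⟩
      have h := hPblock x y
      rw [sub_apply, inner_sub_left] at h
      simp only [Complex.sub_re] at h
      rw [hPP, hC] at h
      have hre : (⟪R y, Q x⟫_ℂ).re = (⟪B y, x⟫_ℂ).re := by rw [hQinner]
      simp only [Set.mem_setOf_eq, hre]
      linarith
    have hcl : closure (Set.range ⇑R) ⊆ {z : H₂ | 0 ≤ (⟪A x, x⟫_ℂ).re - ‖P x‖ ^ 2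
        + 2 * (⟪z, Q x⟫_ℂ).re + ‖z‖ ^ 2} := hclosed.closure_subset_iff.mpr hsub
    have h := hcl (hQnegmem x)
    simp only [Set.mem_setOf_eq, inner_neg_left, Complex.neg_re, norm_neg] at h
    rw [re_inner_self'] at h
    linarith
  -- inequality 2 via maximality
  have hQQsa : IsSelfAdjoint (Q.adjoint ∘L Q) := by
    rw [IsSelfAdjoint, star_eq_adjoint, adjoint_comp, adjoint_adjoint]
  have hXsa : IsSelfAdjoint (A - Q.adjoint ∘L Q) := hAsa.sub hQQsa
  have hXre : ∀ x : H₁, (⟪(A - Q.adjoint ∘L Q) x, x⟫_ℂ).re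
      = (⟪A x, x⟫_ℂ).re - ‖Q x‖ ^ 2 := by
    intro x
    rw [sub_apply, inner_sub_left]
    simp only [Complex.sub_re]
    rw [hQQ]
  have hXpos : (A - Q.adjoint ∘L Q).IsPositive := by
    refine ⟨ContinuousLinearMap.isSelfAdjoint_iff_isSymmetric.mp hXsa, fun x => ?_⟩
    have h1 := hineq1 x
    have h2 : (0:ℝ) ≤ ‖P x‖ ^ 2 := sq_nonneg _
    rw [ContinuousLinearMap.reApplyInnerSelf]
    simp only [RCLike.re_to_complex]
    rw [hXre]
    linarith
  have hXblock : ∀ (x : H₁) (y : H₂),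
      0 ≤ (⟪(A - (A - Q.adjoint ∘L Q)) x, x⟫_ℂ).re + 2 * (⟪B y, x⟫_ℂ).re
        + (⟪C y, y⟫_ℂ).re := by
    intro x y
    have hAX : A - (A - Q.adjoint ∘L Q) = Q.adjoint ∘L Q := sub_sub_cancel A _
    rw [hAX, hQQ, hC]
    have hre : (⟪B y, x⟫_ℂ).re = (⟪Q x, R y⟫_ℂ).re := by
      rw [← hQinner x y, ← inner_conj_symm, Complex.conj_re]
    rw [hre]
    have hns := norm_add_sq (𝕜 := ℂ) (Q x) (R y)
    simp only [RCLike.re_to_complex] at hns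
    nlinarith [sq_nonneg (‖Q x + R y‖)]
  have hineq2 : ∀ x : H₁, (⟪A x, x⟫_ℂ).re - ‖Q x‖ ^ 2 ≤ ‖P x‖ ^ 2 := by
    intro x
    have h := hPmax (A - Q.adjoint ∘L Q) hXpos hXblock x
    rw [hXre, hPP] at h
    exact h
  -- conclude A = P*P + Q*Q
  have hD : A = P.adjoint ∘L P + Q.adjoint ∘L Q := by
    have hzero : ∀ x : H₁, ⟪(A - (P.adjoint ∘L P + Q.adjoint ∘L Q)) x, x⟫_ℂ = 0 := by
      intro x
      have hPPsa : IsSelfAdjoint (P.adjoint ∘L P) := by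
        rw [IsSelfAdjoint, star_eq_adjoint, adjoint_comp, adjoint_adjoint]
      have hDsa : IsSelfAdjoint (A - (P.adjoint ∘L P + Q.adjoint ∘L Q)) :=
        hAsa.sub (hPPsa.add hQQsa)
      have hre0 : (⟪(A - (P.adjoint ∘L P + Q.adjoint ∘L Q)) x, x⟫_ℂ).re = 0 := by
        rw [sub_apply, add_apply, inner_sub_left, inner_add_left]
        simp only [Complex.sub_re, Complex.add_re]
        rw [hPP, hQQ]
        have h1 := hineq1 x
        have h2 := hineq2 x
        linarith
      have hconj : ⟪(A - (P.adjoint ∘L P + Q.adjoint ∘L Q)) x, x⟫_ℂ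
          = (starRingEnd ℂ) ⟪(A - (P.adjoint ∘L P + Q.adjoint ∘L Q)) x, x⟫_ℂ := by
        rw [inner_conj_symm]
        conv_lhs => rw [← hDsa.adjoint_eq]
        rw [adjoint_inner_left]
      have him0 : (⟪(A - (P.adjoint ∘L P + Q.adjoint ∘L Q)) x, x⟫_ℂ).im = 0 := by
        have := congrArg Complex.im hconj
        simp only [Complex.conj_im] at this
        linarith
      exact Complex.ext hre0 him0
    have hc := (inner_map_self_eq_zero
      ((A - (P.adjoint ∘L P + Q.adjoint ∘L Q)) : H₁ →ₗ[ℂ] H₁)).mp (fun x => hzero x)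
    have h0 : A - (P.adjoint ∘L P + Q.adjoint ∘L Q) = 0 := by
      apply ContinuousLinearMap.coe_injective
      simp only [ContinuousLinearMap.coe_sub, ContinuousLinearMap.coe_add,
        ContinuousLinearMap.coe_zero]
      exact hc
    exact sub_eq_zero.mp h0
  refine ⟨Q, ?_, hD, ?_⟩
  · rintro _ ⟨x, rfl⟩
    exact hQmem x
  · ext y
    apply ext_inner_right ℂ
    intro v
    rw [comp_apply, adjoint_inner_left, hQinner]

/-- Given `M = [[A,B],[B*,C]] ≥ 0`, any `P` with `P*P = S(M;{0})` and any `R` with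
`R*R = C`, there exists `Q` with `ran Q ⊆ closure (ran R)` such that
`M = [[P*,Q*],[0,R*]]·[[P,0],[Q,R]]`. -/
theorem exists_Q_of_schur_factor
    {H₁ H₂ : Type*} [NormedAddCommGroup H₁] [InnerProductSpace ℂ H₁]
    [NormedAddCommGroup H₂] [InnerProductSpace ℂ H₂] [CompleteSpace H₁] [CompleteSpace H₂]
    (A P : H₁ →L[ℂ] H₁) (C R : H₂ →L[ℂ] H₂) (B : H₂ →L[ℂ] H₁)
    (hAsa : IsSelfAdjoint A)
    (hM : BlockPos2 A B C)
    (hP : IsSchurComplementFst A B C (P.adjoint ∘L P))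
    (hR : R.adjoint ∘L R = C) :
    ∃ Q : H₁ →L[ℂ] H₂, Set.range Q ⊆ closure (Set.range R) ∧
      A = P.adjoint ∘L P + Q.adjoint ∘L Q ∧
      B = Q.adjoint ∘L R := by
  obtain ⟨hPpos, hPblock, hPmax⟩ := hP
  exact exists_Q_of_schur_factor' A P C R B hAsa hM hPpos hPblock hPmax hR
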